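/- Let d_1, ..., d_n be positive integers, each a power of 2, such that Σ_k 1/d_k ≤ 1. Then there exists a function t : {1,...,n} → ℤ with t_k ∈ (-d_k, 0] for each k, such that for every integer time s ≥ 1, at most one index k satisfies s ≡ t_k (mod d_k). In other words, the arithmetic progressions { t_k + m·d_k : m ∈ ℤ_+ } restricted to positive integers are pairwise disjoint. -/

import Mathlib

/-- Auxiliary: the statement proved by induction on `n`. -/
lemma stmt3_aux : ∀ (n : ℕ) (d : Fin n → ℕ), (∀ k, ∃ ℓ : ℕ, d k = 2 ^ ℓ) →
    (∑ k, (1 : ℝ) / d k ≤ 1) →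
    ∃ t : Fin n → ℤ, (∀ k, -(d k : ℤ) < t k ∧ t k ≤ 0) ∧
      ∀ s : ℤ, 1 ≤ s → ∀ k k' : Fin n,
        (d k : ℤ) ∣ (s - t k) → (d k' : ℤ) ∣ (s - t k') → k = k' := by
  intro n
  induction n with
  | zero =>
    intro d _ _
    exact ⟨Fin.elim0, fun k => k.elim0, fun s _ k => k.elim0⟩
  | succ n ih =>
    intro d hpow hsum
    have hd_pos : ∀ k, 0 < d k := by
      intro k; obtain ⟨ℓ, hℓ⟩ := hpow k; rw [hℓ]; positivity
    have hterm_pos : ∀ k : Fin (n+1), 0 < (1 : ℝ) / d k := by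
      intro k
      have := hd_pos k
      positivity
    by_cases hdup : ∃ i j : Fin (n+1), i ≠ j ∧ d i = d j
    · -- merge case
      obtain ⟨i, j, hij, hdij⟩ := hdup
      -- two arms of the same period; sum over {i,j} ≤ total sum
      have hij_sum : (1:ℝ)/d i + (1:ℝ)/d j ≤ 1 := by
        calc (1:ℝ)/d i + (1:ℝ)/d j = ∑ k ∈ ({i, j} : Finset (Fin (n+1))), (1:ℝ)/d k := by
              rw [Finset.sum_pair hij]
          _ ≤ ∑ k, (1:ℝ)/d k := by
              apply Finset.sum_le_sum_of_subset_of_nonneg (Finset.subset_univ _)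
              intro k _ _; exact (hterm_pos k).le
          _ ≤ 1 := hsum
      have hdi2 : 2 ≤ d i := by
        by_contra h
        have h1 := hd_pos i
        have hdk1 : d i = 1 := by omega
        rw [hdk1, ← hdij, hdk1] at hij_sum
        norm_num at hij_sum
      obtain ⟨ℓ, hℓ⟩ := hpow i
      have hℓ1 : 1 ≤ ℓ := by
        rcases Nat.eq_zero_or_pos ℓ with h | h
        · exfalso; rw [h] at hℓ; omega
        · exact h
      set c : ℕ := 2 ^ (ℓ - 1) with hc
      have hdi : d i = 2 * c := by
        rw [hℓ, hc, ← pow_succ']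
        congr 1; omega
      have hc_pos : 0 < c := Nat.pow_pos (by norm_num)
      have hc0 : (0:ℤ) < (c:ℤ) := by exact_mod_cast hc_pos
      -- the index i' in Fin n corresponding to i
      obtain ⟨i', hi'⟩ := Fin.exists_succAbove_eq hij
      -- the merged family
      set d' : Fin n → ℕ := fun m => if m = i' then c else d (j.succAbove m) with hd'
      have hd'pow : ∀ m, ∃ ℓ : ℕ, d' m = 2 ^ ℓ := by
        intro m
        rw [hd']
        by_cases h : m = i'
        · exact ⟨ℓ - 1, by simp [h, hc]⟩
        · simpa [h] using hpow (j.succAbove m)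
      have hd'sum : ∑ m, (1 : ℝ) / d' m ≤ 1 := by
        have hsplit : ∑ k, (1:ℝ)/d k = (1:ℝ)/d j + ∑ m : Fin n, (1:ℝ)/d (j.succAbove m) :=
          Fin.sum_univ_succAbove (fun k => (1:ℝ)/d k) j
        have hupd : ∑ m : Fin n, (1:ℝ)/d' m
            = ∑ m : Fin n, (1:ℝ)/d (j.succAbove m) - (1:ℝ)/d i + (1:ℝ)/c := by
          rw [← Finset.add_sum_erase _ _ (Finset.mem_univ i'),
              ← Finset.add_sum_erase _ (fun m => (1:ℝ)/d (j.succAbove m)) (Finset.mem_univ i')]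
          have : ∀ m ∈ Finset.univ.erase i', (1:ℝ)/d' m = (1:ℝ)/d (j.succAbove m) := by
            intro m hm
            rw [hd']
            simp [Finset.ne_of_mem_erase hm]
          rw [Finset.sum_congr rfl this, hi']
          simp [hd']
          ring
        rw [hupd]
        have h1c : (1:ℝ)/c = (1:ℝ)/d i + (1:ℝ)/d j := by
          rw [hdi, ← hdij, hdi]
          have hcr : (0:ℝ) < c := by exact_mod_cast hc_pos
          push_cast
          field_simp
          ring
        rw [h1c]
        calc ∑ m : Fin n, (1:ℝ)/d (j.succAbove m) - 1/(d i : ℝ) + (1/(d i : ℝ) + 1/(d j : ℝ))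
            = (1:ℝ)/d j + ∑ m : Fin n, (1:ℝ)/d (j.succAbove m) := by ring
          _ = ∑ k, (1:ℝ)/d k := hsplit.symm
          _ ≤ 1 := hsum
      obtain ⟨t', ht'b, ht'c⟩ := ih d' hd'pow hd'sum
      -- the map M sending each index of the big family to its merged index
      have hMex : ∀ k : Fin (n+1), ∃ m : Fin n, if k = j then m = i' else j.succAbove m = k := by
        intro k
        by_cases h : k = j
        · exact ⟨i', by simp [h]⟩
        · obtain ⟨m, hm⟩ := Fin.exists_succAbove_eq h
          exact ⟨m, by simp [h, hm]⟩
      choose M hM using hMex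
      have hMj : M j = i' := by have := hM j; simpa using this
      have hMk : ∀ k : Fin (n+1), k ≠ j → j.succAbove (M k) = k := by
        intro k hk; have := hM k; simpa [hk] using this
      have hMi : M i = i' := by
        apply Fin.succAbove_right_injective (p := j)
        rw [hMk i hij, hi']
      have hMne : ∀ k : Fin (n+1), k ≠ j → k ≠ i → M k ≠ i' := by
        intro k hkj hki h
        apply hki
        rw [← hMk k hkj, h, hi']
      have hd'M : ∀ k : Fin (n+1), k ≠ j → k ≠ i → d' (M k) = d k := by
        intro k hkj hki
        rw [hd']
        simp only [if_neg (hMne k hkj hki)]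
        rw [hMk k hkj]
      have hd'i' : d' i' = c := by simp [hd']
      have hbi' := ht'b i'
      rw [hd'i'] at hbi'
      have hdjZ : (d j : ℤ) = 2 * c := by rw [← hdij, hdi]; push_cast; ring
      have hdiZ : (d i : ℤ) = 2 * c := by rw [hdi]; push_cast; ring
      -- the offsets
      have hdle : ∀ k : Fin (n+1), k ≠ j → (d' (M k) : ℤ) ≤ (d k : ℤ) := by
        intro k hkj
        by_cases hki : k = i
        · rw [hki, hMi, hd'i', hdiZ]
          omega
        · rw [hd'M k hkj hki]
      set T : Fin (n+1) → ℤ := fun k => if k = j then t' i' - c else t' (M k) with hT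
      have hTj : T j = t' i' - c := by rw [hT]; simp
      have hTk : ∀ k : Fin (n+1), k ≠ j → T k = t' (M k) := by
        intro k hk; rw [hT]; simp [hk]
      refine ⟨T, ?_, ?_⟩
      · intro k
        by_cases hkj : k = j
        · rw [hkj, hTj, hdjZ]
          omega
        · have hb := ht'b (M k)
          have hle := hdle k hkj
          rw [hTk k hkj]
          exact ⟨by omega, hb.2⟩
      · intro s hs k k' hk hk'
        have hcdvd : ∀ k₀ : Fin (n+1), (d k₀ : ℤ) ∣ s - T k₀ →
            (d' (M k₀) : ℤ) ∣ s - t' (M k₀) := by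
          intro k₀ h₀
          by_cases hkj : k₀ = j
          · rw [hkj] at h₀ ⊢
            rw [hTj, hdjZ] at h₀
            rw [hMj, hd'i']
            have h2c : (c:ℤ) ∣ s - (t' i' - c) := dvd_trans ⟨2, by ring⟩ h₀
            have heq : s - t' i' = (s - (t' i' - c)) - c := by ring
            rw [heq]
            exact dvd_sub h2c dvd_rfl
          · by_cases hki : k₀ = i
            · rw [hki] at h₀ ⊢
              rw [hTk i hij, hMi, hdiZ] at h₀
              rw [hMi, hd'i']
              exact dvd_trans ⟨2, by ring⟩ h₀
            · rw [hd'M k₀ hkj hki]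
              rw [hTk k₀ hkj] at h₀
              exact h₀
        have hMM : M k = M k' := ht'c s hs _ _ (hcdvd k hk) (hcdvd k' hk')
        have himp : ∀ a b : Fin (n+1), (d a : ℤ) ∣ s - T a → (d b : ℤ) ∣ s - T b →
            a = j → b ≠ j → M a = M b → False := by
          intro a b ha hb haj hbj hMab
          have hbi : b = i := by rw [← hMk b hbj, ← hMab, haj, hMj, hi']
          rw [haj, hTj, hdjZ] at ha
          rw [hbi, hTk i hij, hMi, hdiZ] at hb
          have hdif : (2*(c:ℤ)) ∣ (s - t' i') - (s - (t' i' - c)) := dvd_sub hb ha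
          have h1 : (2*(c:ℤ)) ∣ -(c:ℤ) := by convert hdif using 1; ring
          have h2 : (2*(c:ℤ)) ∣ (c:ℤ) := (dvd_neg).mp h1
          have := Int.le_of_dvd hc0 h2
          omega
        by_cases hkj : k = j <;> by_cases hk'j : k' = j
        · rw [hkj, hk'j]
        · exact (himp k k' hk hk' hkj hk'j hMM).elim
        · exact (himp k' k hk' hk hk'j hkj hMM.symm).elim
        · rw [← hMk k hkj, ← hMk k' hk'j, hMM]
    · -- injective case: all periods distinct
      push_neg at hdup
      have hinj : ∀ k k' : Fin (n+1), d k = d k' → k = k' := by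
        intro k k' h
        by_contra hne
        exact hdup k k' hne h
      rcases Nat.eq_zero_or_pos n with hn | hn
      · subst hn
        refine ⟨fun _ => 0, ?_, ?_⟩
        · intro k
          have h0 : (0:ℤ) < (d k : ℤ) := by exact_mod_cast hd_pos k
          constructor
          · simpa using h0
          · simp
        · intro s _ k k' _ _
          have h1 := k.isLt
          have h2 := k'.isLt
          apply Fin.ext
          omega
      · -- n ≥ 1, so all periods are ≥ 2
        have hd2 : ∀ k, 2 ≤ d k := by
          intro k
          by_contra h
          have hdk1 : d k = 1 := by have := hd_pos k; omega
          have h2n : (2:ℕ) ≤ n + 1 := by omega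
          have : Nontrivial (Fin (n+1)) := Fin.nontrivial_iff_two_le.mpr h2n
          obtain ⟨k2, hk2⟩ := exists_ne k
          have hle : (1:ℝ)/d k + (1:ℝ)/d k2 ≤ 1 := by
            calc (1:ℝ)/d k + (1:ℝ)/d k2 = ∑ m ∈ ({k, k2} : Finset (Fin (n+1))), (1:ℝ)/d m := by
                  rw [Finset.sum_pair hk2.symm]
              _ ≤ ∑ m, (1:ℝ)/d m := by
                  apply Finset.sum_le_sum_of_subset_of_nonneg (Finset.subset_univ _)
                  intro m _ _; exact (hterm_pos m).le
              _ ≤ 1 := hsum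
          rw [hdk1] at hle
          have hp := hterm_pos k2
          push_cast at hle
          linarith
        choose L hL using hpow
        have hL1 : ∀ k, 1 ≤ L k := by
          intro k
          have h2 := hd2 k
          rw [hL k] at h2
          by_contra h
          have hz : L k = 0 := by omega
          rw [hz] at h2
          norm_num at h2
        refine ⟨fun k => -(2 ^ (L k - 1) : ℤ), ?_, ?_⟩
        · intro k
          have hlt : (2:ℤ) ^ (L k - 1) < 2 ^ (L k) :=
            pow_lt_pow_right₀ (by norm_num) (by have := hL1 k; omega)
          constructor
          · show -((d k : ℕ) : ℤ) < -(2 ^ (L k - 1) : ℤ)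
            rw [hL k]
            push_cast
            omega
          · show -(2 ^ (L k - 1) : ℤ) ≤ 0
            have h0 : (0:ℤ) < 2 ^ (L k - 1) := by positivity
            omega
        · intro s hs k k' hk hk'
          simp only [sub_neg_eq_add] at hk hk'
          rw [hL k] at hk
          rw [hL k'] at hk'
          push_cast at hk hk'
          -- key: exponents must be equal
          have key : ∀ a b : ℕ, 1 ≤ a → 1 ≤ b → (2:ℤ)^a ∣ s + 2^(a-1) → (2:ℤ)^b ∣ s + 2^(b-1) →
              a ≤ b → a = b := by
            intro a b ha hb hda hdb hab
            by_contra hne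
            have hlt : a < b := lt_of_le_of_ne hab hne
            have h1 : (2:ℤ)^a ∣ 2^(b-1) := pow_dvd_pow 2 (by omega)
            have h2 : (2:ℤ)^a ∣ 2^b := pow_dvd_pow 2 (by omega)
            have hsd : (2:ℤ)^a ∣ s := by
              have heq : s = (s + 2^(b-1)) - 2^(b-1) := by ring
              rw [heq]
              exact dvd_sub (dvd_trans h2 hdb) h1
            have h3 : (2:ℤ)^a ∣ 2^(a-1) := by
              have heq : (2:ℤ)^(a-1) = (s + 2^(a-1)) - s := by ring
              rw [heq]
              exact dvd_sub hda hsd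
            have h4 := Int.le_of_dvd (by positivity) h3
            have h5 : (2:ℤ)^(a-1) < 2^a := pow_lt_pow_right₀ (by norm_num) (by omega)
            omega
          have heq : L k = L k' := by
            rcases le_total (L k) (L k') with h | h
            · exact key _ _ (hL1 k) (hL1 k') hk hk' h
            · exact (key _ _ (hL1 k') (hL1 k) hk' hk h).symm
          apply hinj
          rw [hL k, hL k', heq]

/-- If all periods are powers of 2 with reciprocals summing to at most 1, then there exist
offsets `t k ∈ (-d k, 0]` such that no two arithmetic progressions ever collide at a
positive time: a feasible 1-PPP exists. -/
theorem stmt3 (n : ℕ) (d : Fin n → ℕ) (hpow : ∀ k, ∃ ℓ : ℕ, d k = 2 ^ ℓ)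
    (hsum : ∑ k, (1 : ℝ) / d k ≤ 1) :
    ∃ t : Fin n → ℤ, (∀ k, -(d k : ℤ) < t k ∧ t k ≤ 0) ∧
      ∀ s : ℤ, 1 ≤ s → ∀ k k' : Fin n,
        (d k : ℤ) ∣ (s - t k) → (d k' : ℤ) ∣ (s - t k') → k = k' := by
  exact stmt3_aux n d hpow hsum
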